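/- With notation as above (p_i(t) = a_i·k^(t·m+s) + b_i·k^s·(k^(t·m)−1)/(k^m−1) + c_i for i = 1,2, with p₂(t) > 0 for all t ≥ 0), let γ = (a₁·(k^m−1)+b₁)/(a₂·(k^m−1)+b₂) when a₂·(k^m−1)+b₂ > 0. Then the sequence q(t) = p₁(t)/p₂(t) is either strictly increasing with q(t) < γ for all t, constant equal to γ, or strictly decreasing with q(t) > γ for all t; in particular q is monotone. -/

import Mathlib

theorem pumped_quotient_monotone_trichotomy (k m s : ℕ) (hk : 2 ≤ k) (hm : 1 ≤ m)
    (a₁ a₂ b₁ b₂ c₁ c₂ : ℕ)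
    (p₁ p₂ : ℕ → ℝ)
    (hp₁ : ∀ t, p₁ t = (a₁ : ℝ) * (k : ℝ) ^ (t * m + s) +
        (b₁ : ℝ) * (k : ℝ) ^ s * ((k : ℝ) ^ (t * m) - 1) / ((k : ℝ) ^ m - 1) + c₁)
    (hp₂ : ∀ t, p₂ t = (a₂ : ℝ) * (k : ℝ) ^ (t * m + s) +
        (b₂ : ℝ) * (k : ℝ) ^ s * ((k : ℝ) ^ (t * m) - 1) / ((k : ℝ) ^ m - 1) + c₂)
    (hpos : ∀ t, 0 < p₂ t)
    (hden : 0 < (a₂ : ℝ) * ((k : ℝ) ^ m - 1) + b₂) :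
    (StrictMono (fun t => p₁ t / p₂ t) ∧
        ∀ t, p₁ t / p₂ t < (a₁ * ((k : ℝ) ^ m - 1) + b₁) / (a₂ * ((k : ℝ) ^ m - 1) + b₂)) ∨
    (∀ t, p₁ t / p₂ t = (a₁ * ((k : ℝ) ^ m - 1) + b₁) / (a₂ * ((k : ℝ) ^ m - 1) + b₂)) ∨
    (StrictAnti (fun t => p₁ t / p₂ t) ∧
        ∀ t, p₁ t / p₂ t > (a₁ * ((k : ℝ) ^ m - 1) + b₁) / (a₂ * ((k : ℝ) ^ m - 1) + b₂)) := by
  have hk1 : (1:ℝ) < (k:ℝ) := by exact_mod_cast hk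
  have hkm : (1:ℝ) < (k:ℝ) ^ m := one_lt_pow₀ hk1 (by omega)
  set K : ℝ := (k:ℝ) ^ m - 1 with hKdef
  have hKpos : 0 < K := by simp only [hKdef]; linarith
  have hKne : K ≠ 0 := ne_of_gt hKpos
  have hksp : (0:ℝ) < (k:ℝ) ^ s := pow_pos (by linarith) s
  set x : ℕ → ℝ := fun t => (k:ℝ) ^ (t * m) with hxdef
  have hxmono : StrictMono x := by
    intro t t' h
    simp only [hxdef]
    rw [mul_comm t m, mul_comm t' m, pow_mul, pow_mul]
    exact pow_lt_pow_right₀ hkm h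
  set A₁ : ℝ := ((a₁:ℝ) * K + b₁) * (k:ℝ) ^ s / K with hA₁
  set A₂ : ℝ := ((a₂:ℝ) * K + b₂) * (k:ℝ) ^ s / K with hA₂
  set B₁ : ℝ := (c₁:ℝ) - (b₁:ℝ) * (k:ℝ) ^ s / K with hB₁
  set B₂ : ℝ := (c₂:ℝ) - (b₂:ℝ) * (k:ℝ) ^ s / K with hB₂
  have hP1 : ∀ t, p₁ t = A₁ * x t + B₁ := by
    intro t
    rw [hp₁ t, hA₁, hB₁]
    simp only [hxdef, pow_add]
    field_simp
    ring
  have hP2 : ∀ t, p₂ t = A₂ * x t + B₂ := by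
    intro t
    rw [hp₂ t, hA₂, hB₂]
    simp only [hxdef, pow_add]
    field_simp
    ring
  have hA₂pos : 0 < A₂ := div_pos (mul_pos hden hksp) hKpos
  have hγ : ((a₁:ℝ) * K + b₁) / ((a₂:ℝ) * K + b₂) = A₁ / A₂ := by
    have hY : (a₂:ℝ) * K + b₂ ≠ 0 := ne_of_gt hden
    have hks : (k:ℝ) ^ s ≠ 0 := ne_of_gt hksp
    rw [hA₁, hA₂]
    rw [div_div_div_eq]
    field_simp
  set D : ℝ := A₂ * B₁ - A₁ * B₂ with hDdef
  have hkey : ∀ t, p₁ t * A₂ - p₂ t * A₁ = D := by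
    intro t; rw [hP1 t, hP2 t, hDdef]; ring
  have hmono : ∀ t t', p₁ t' * p₂ t - p₁ t * p₂ t' = (x t' - x t) * (-D) := by
    intro t t'; rw [hP1 t, hP2 t, hP1 t', hP2 t', hDdef]; ring
  rcases lt_trichotomy D 0 with hD | hD | hD
  · left
    constructor
    · intro t t' h
      simp only
      rw [div_lt_div_iff₀ (hpos t) (hpos t')]
      have h1 := hmono t t'
      have h2 := hxmono h
      have h3 : 0 < (x t' - x t) * (-D) := mul_pos (sub_pos.2 h2) (by linarith)
      linarith
    · intro t
      rw [hγ, div_lt_div_iff₀ (hpos t) hA₂pos]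
      linarith [hkey t]
  · right; left
    intro t
    rw [hγ, div_eq_div_iff (ne_of_gt (hpos t)) (ne_of_gt hA₂pos)]
    linarith [hkey t]
  · right; right
    constructor
    · intro t t' h
      simp only
      rw [div_lt_div_iff₀ (hpos t') (hpos t)]
      have h1 := hmono t t'
      have h2 := hxmono h
      have h3 : 0 < (x t' - x t) * D := mul_pos (sub_pos.2 h2) hD
      nlinarith
    · intro t
      rw [gt_iff_lt, hγ, div_lt_div_iff₀ hA₂pos (hpos t)]
      linarith [hkey t]
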